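/- Let G be a finite group, N a normal subgroup of G, and g_1, …, g_d elements of G such that G = ⟨g_1, …, g_d⟩N (i.e. the images g_1N, …, g_dN generate G/N). If G can be generated by d elements (i.e. d(G) ≤ d), then there exist u_1, …, u_d ∈ N such that G = ⟨g_1u_1, …, g_du_d⟩. -/

import Mathlib

open Subgroup Finset Pointwise

section Gaschutz

open scoped Classical

variable {G : Type*} [Group G] [Fintype G]

/-- Number of tuples `n ∈ N^d` with `⟨g i * n i⟩ = H`. -/
noncomputable def gcnt (N : Subgroup G) (d : ℕ) (g : Fin d → G) (H : Subgroup G) : ℕ :=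
  (Finset.univ.filter fun n : Fin d → G =>
    (∀ i, n i ∈ N) ∧ Subgroup.closure (Set.range fun i => g i * n i) = H).card

lemma gcnt_total (N : Subgroup G) [N.Normal] (d : ℕ) (g : Fin d → G) (H : Subgroup G)
    (hH : H ⊔ N = ⊤) :
    (Finset.univ.filter fun n : Fin d → G =>
        (∀ i, n i ∈ N) ∧ ∀ i, g i * n i ∈ H).card = Nat.card ↥(N ⊓ H) ^ d := by
  have hfib : ∀ i : Fin d,
      (Finset.univ.filter fun x : G => x ∈ N ∧ g i * x ∈ H).card = Nat.card ↥(N ⊓ H) := by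
    intro i
    have hgi : g i ∈ (H : Set G) * (N : Set G) := by
      rw [← Subgroup.mul_normal H N, hH]; trivial
    obtain ⟨h, hh, x, hx, hhx⟩ := hgi
    have hn₀N : x⁻¹ ∈ N := inv_mem hx
    have hgn₀ : g i * x⁻¹ ∈ H := by
      have : g i * x⁻¹ = h := by rw [← hhx]; group
      rw [this]; exact hh
    have e : {y : G // y ∈ N ∧ g i * y ∈ H} ≃ ↥(N ⊓ H) :=
      { toFun := fun y => ⟨x * y.1, by
          refine Subgroup.mem_inf.mpr ⟨mul_mem hx y.2.1, ?_⟩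
          have hy : x * y.1 = (g i * x⁻¹)⁻¹ * (g i * y.1) := by group
          rw [hy]; exact mul_mem (inv_mem hgn₀) y.2.2⟩
        invFun := fun y => ⟨x⁻¹ * y.1, by
          obtain ⟨h1, h2⟩ := Subgroup.mem_inf.mp y.2
          refine ⟨mul_mem hn₀N h1, ?_⟩
          have hy : g i * (x⁻¹ * y.1) = (g i * x⁻¹) * y.1 := by group
          rw [hy]; exact mul_mem hgn₀ h2⟩
        left_inv := fun y => by ext; simp
        right_inv := fun y => by ext; simp }
    rw [← Fintype.card_subtype, ← Nat.card_eq_fintype_card]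
    exact Nat.card_congr e
  have hset : (Finset.univ.filter fun n : Fin d → G =>
      (∀ i, n i ∈ N) ∧ ∀ i, g i * n i ∈ H)
      = Fintype.piFinset fun i => Finset.univ.filter fun x : G => x ∈ N ∧ g i * x ∈ H := by
    ext n
    simp [Fintype.mem_piFinset, forall_and]
  rw [hset, Fintype.card_piFinset]
  simp [hfib]

lemma gcnt_sum (N : Subgroup G) (d : ℕ) (g : Fin d → G) (H : Subgroup G) :
    (Finset.univ.filter fun n : Fin d → G =>
        (∀ i, n i ∈ N) ∧ ∀ i, g i * n i ∈ H).card
      = ∑ K ∈ Finset.univ.filter (· ≤ H), gcnt N d g K := by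
  rw [Finset.card_eq_sum_card_fiberwise
    (f := fun n : Fin d → G => Subgroup.closure (Set.range fun i => g i * n i))
    (t := Finset.univ.filter (· ≤ H)) ?_]
  · refine Finset.sum_congr rfl fun K hK => ?_
    have hKH : K ≤ H := by simpa using hK
    unfold gcnt
    rw [Finset.filter_filter]
    congr 1
    ext n
    simp only [Finset.mem_filter, Finset.mem_univ, true_and]
    constructor
    · rintro ⟨⟨h1, _⟩, h3⟩; exact ⟨h1, h3⟩
    · rintro ⟨h1, h3⟩
      exact ⟨⟨h1, fun i => hKH (h3 ▸ Subgroup.subset_closure ⟨i, rfl⟩)⟩, h3⟩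
  · intro n hn
    simp only [Finset.mem_filter, Finset.mem_univ, true_and] at hn ⊢
    simpa using (Subgroup.closure_le H (k := Set.range fun i => g i * n i)).mpr (by rintro _ ⟨i, rfl⟩; exact (show (∀ i, n i ∈ N) ∧ ∀ i, g i * n i ∈ H by simpa using hn).2 i)

lemma gcnt_ne_zero_sup (N : Subgroup G) (d : ℕ) (g : Fin d → G)
    (hg : Subgroup.closure (Set.range g) ⊔ N = ⊤) (K : Subgroup G)
    (h : gcnt N d g K ≠ 0) : K ⊔ N = ⊤ := by
  obtain ⟨n, hn⟩ := Finset.card_ne_zero.mp h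
  simp only [Finset.mem_filter, Finset.mem_univ, true_and] at hn
  refine top_unique ?_
  rw [← hg]
  refine sup_le ?_ le_sup_right
  refine (Subgroup.closure_le _).mpr ?_
  rintro _ ⟨i, rfl⟩
  have h1 : g i * n i ∈ K ⊔ N :=
    le_sup_left (α := Subgroup G) (hn.2 ▸ Subgroup.subset_closure ⟨i, rfl⟩)
  have h2 : (n i)⁻¹ ∈ K ⊔ N := le_sup_right (α := Subgroup G) (inv_mem (hn.1 i))
  have : g i = (g i * n i) * (n i)⁻¹ := by group
  rw [this]
  exact mul_mem h1 h2

lemma gcnt_indep (N : Subgroup G) [N.Normal] (d : ℕ) (g g' : Fin d → G)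
    (hg : Subgroup.closure (Set.range g) ⊔ N = ⊤)
    (hg' : Subgroup.closure (Set.range g') ⊔ N = ⊤) :
    ∀ m (H : Subgroup G), Nat.card H ≤ m → H ⊔ N = ⊤ →
      gcnt N d g H = gcnt N d g' H := by
  intro m
  induction m with
  | zero =>
    intro H hH _
    exact absurd (Nat.le_zero.mp hH) Nat.card_pos.ne'
  | succ m ih =>
    intro H hHm hH
    have hsplit : (Finset.univ.filter (· ≤ H) : Finset (Subgroup G))
        = insert H (Finset.univ.filter (· < H)) := by
      ext K
      simp [le_iff_lt_or_eq, or_comm]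
    have hHnot : H ∉ (Finset.univ.filter (· < H) : Finset (Subgroup G)) := by simp
    have key : ∀ f : Fin d → G, Subgroup.closure (Set.range f) ⊔ N = ⊤ →
        gcnt N d f H + ∑ K ∈ Finset.univ.filter (· < H), gcnt N d f K
          = Nat.card ↥(N ⊓ H) ^ d := by
      intro f hf
      rw [← gcnt_total N d f H hH, gcnt_sum N d f H, hsplit, Finset.sum_insert hHnot]
    have hsums : ∑ K ∈ Finset.univ.filter (· < H), gcnt N d g K
        = ∑ K ∈ Finset.univ.filter (· < H), gcnt N d g' K := by
      refine Finset.sum_congr rfl fun K hK => ?_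
      have hKH : K < H := by simpa using hK
      by_cases hKN : K ⊔ N = ⊤
      · refine ih K ?_ hKN
        have hlt : Nat.card K < Nat.card H := by
          rw [show (Nat.card K) = (K : Set G).ncard from Nat.card_coe_set_eq _,
              show (Nat.card H) = (H : Set G).ncard from Nat.card_coe_set_eq _]
          exact Set.ncard_lt_ncard (SetLike.coe_ssubset_coe.mpr hKH) (Set.toFinite _)
        omega
      · have z1 : gcnt N d g K = 0 := by
          by_contra hz; exact hKN (gcnt_ne_zero_sup N d g hg K hz)
        have z2 : gcnt N d g' K = 0 := by
          by_contra hz; exact hKN (gcnt_ne_zero_sup N d g' hg' K hz)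
        rw [z1, z2]
    have h1 := key g hg
    have h2 := key g' hg'
    omega

end Gaschutz

/-- **Gaschütz's lemma.** Let `G` be a finite group, `N` a normal subgroup of `G`, and
`g 1, …, g d` elements of `G` generating `G` modulo `N`. If `G` can be generated by `d`
elements, then there exist `u 1, …, u d ∈ N` such that `G = ⟨g 1 * u 1, …, g d * u d⟩`. -/
theorem gaschutz_lemma {G : Type*} [Group G] [Finite G]
    (N : Subgroup G) (hN : N.Normal) (d : ℕ) (g : Fin d → G)
    (hgen : Subgroup.closure (Set.range g) ⊔ N = ⊤)
    (hrank : Group.rank G ≤ d) :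
    ∃ u : Fin d → G, (∀ i, u i ∈ N) ∧
      Subgroup.closure (Set.range fun i => g i * u i) = ⊤ := by
  classical
  have := Fintype.ofFinite G
  -- build a generating d-tuple
  obtain ⟨S, hScard, hSgen⟩ := Group.rank_spec G
  set l := S.toList with hl
  have hlen : l.length ≤ d := by
    rw [hl, Finset.length_toList]; omega
  set h : Fin d → G := fun i => if hi : (i : ℕ) < l.length then l.get ⟨i, hi⟩ else 1 with hh
  have hhgen : Subgroup.closure (Set.range h) = ⊤ := by
    refine top_unique ?_
    rw [← hSgen]
    refine (Subgroup.closure_le _).mpr ?_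
    intro x hx
    have hxl : x ∈ l := by rwa [hl, Finset.mem_toList]
    obtain ⟨j, hj⟩ := List.get_of_mem hxl
    have hjd : (j : ℕ) < d := lt_of_lt_of_le j.2 hlen
    refine Subgroup.subset_closure ⟨⟨j, hjd⟩, ?_⟩
    simp only [hh]
    rw [dif_pos j.2]
    exact hj
  have hhsup : Subgroup.closure (Set.range h) ⊔ N = ⊤ := by rw [hhgen]; exact top_sup_eq N
  have htop : (⊤ : Subgroup G) ⊔ N = ⊤ := top_sup_eq N
  have hpos : gcnt N d h ⊤ ≠ 0 := by
    have : (fun _ : Fin d => (1 : G)) ∈ Finset.univ.filter fun n : Fin d → G =>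
        (∀ i, n i ∈ N) ∧ Subgroup.closure (Set.range fun i => h i * n i) = ⊤ := by
      simp only [Finset.mem_filter, Finset.mem_univ, true_and]
      exact ⟨fun _ => one_mem N, by simpa using hhgen⟩
    have hne : (Finset.univ.filter fun n : Fin d → G =>
        (∀ i, n i ∈ N) ∧ Subgroup.closure (Set.range fun i => h i * n i) = ⊤).Nonempty :=
      ⟨_, this⟩
    unfold gcnt
    exact Finset.card_ne_zero.mpr (by convert hne using 2)
  have heq : gcnt N d g ⊤ = gcnt N d h ⊤ :=
    gcnt_indep N d g h hgen hhsup (Nat.card G) ⊤ (le_of_eq (Nat.card_congr Subgroup.topEquiv.toEquiv)) htop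
  have hg0 : gcnt N d g ⊤ ≠ 0 := heq ▸ hpos
  obtain ⟨u, hu⟩ := Finset.card_ne_zero.mp hg0
  simp only [Finset.mem_filter, Finset.mem_univ, true_and] at hu
  exact ⟨u, hu.1, hu.2⟩
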